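/- Given k+1 NFA A_0, ..., A_k over Σ, define a k-tape automaton C from A_k whose states are Q_k ∪ (Q_k × Σ × {1,...,k−1}), initial state s_k, final states F_k, and transitions: q →^{(σ,0)} (q,σ,1) for all q, σ; (q,σ,i) →^{(σ,i)} (q,σ,i+1) for 1 ≤ i ≤ k−2; and (q,σ,k−1) →^{(σ,k−1)} q' whenever (q,σ,q') ∈ Δ_k. Then there exist words w_i ∈ L(A_i) for i ∈ [k] with (w_0,...,w_{k−1}) ∈ L(C) if and only if ⋂_{i=0}^{k} L(A_i) ≠ ∅. -/

import Mathlib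

/-- A (one-way) `k`-tape automaton: transitions read a letter from one of the
`k` tapes. -/
structure MTA (α : Type*) (k : ℕ) (Q : Type*) where
  step : Q → α × Fin k → Set Q
  start : Set Q
  accept : Set Q

/-- `M.Reach q w q'`: from state `q` with remaining tape contents `w`, the
automaton can consume all tapes and end in state `q'`. -/
inductive MTA.Reach {α : Type*} {k : ℕ} {Q : Type*} (M : MTA α k Q) :
    Q → (Fin k → List α) → Q → Prop
  | refl (q : Q) : MTA.Reach M q (fun _ => []) q
  | step {q q' q'' : Q} {σ : α} {i : Fin k} {w : Fin k → List α} :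
      q' ∈ M.step q (σ, i) → MTA.Reach M q' w q'' →
      MTA.Reach M q (Function.update w i (σ :: w i)) q''

/-- The `k`-tuple `w` of tape contents is accepted by the `k`-tape automaton
`M`: some run from an initial state fully reads all tapes and ends in a final
state. -/
def MTA.Accepts {α : Type*} {k : ℕ} {Q : Type*} (M : MTA α k Q)
    (w : Fin k → List α) : Prop :=
  ∃ q ∈ M.start, ∃ f ∈ M.accept, M.Reach q w f

/-- The `k`-tape automaton `C` built from the NFA `Ak`: states
`Q_k ∪ (Q_k × Σ × {1,…,k-1})`, initial/final states those of `Ak`, and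
transitions `q →^{(σ,0)} (q,σ,1)`; `(q,σ,i) →^{(σ,i)} (q,σ,i+1)` for
`1 ≤ i ≤ k-2`; and `(q,σ,k-1) →^{(σ,k-1)} q'` whenever `(q,σ,q') ∈ Δ_k`.
(The tag `j : Fin (k-1)` encodes the label `i = j+1`.) -/
def tapeAut {α Qk : Type*} (k : ℕ) (hk : 2 ≤ k) (Ak : NFA α Qk) :
    MTA α k (Qk ⊕ Qk × α × Fin (k - 1)) where
  step := fun x τ =>
    match x with
    | Sum.inl q =>
        {y | τ.2 = (⟨0, by omega⟩ : Fin k) ∧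
             y = Sum.inr (q, τ.1, (⟨0, by omega⟩ : Fin (k - 1)))}
    | Sum.inr (q, σ, j) =>
        {y | τ.1 = σ ∧ (τ.2 : Fin k).val = j.val + 1 ∧
             ((∃ h : j.val + 1 < k - 1, y = Sum.inr (q, σ, ⟨j.val + 1, h⟩)) ∨
              (j.val + 1 = k - 1 ∧ ∃ q', q' ∈ Ak.step q σ ∧ y = Sum.inl q'))}
  start := Sum.inl '' Ak.start
  accept := Sum.inl '' Ak.accept


-- decomposition of evalFrom over start set
lemma mem_evalFrom_iff' {α σ : Type*} (M : NFA α σ) (u : List α) :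
    ∀ (S : Set σ) (f : σ), f ∈ M.evalFrom S u ↔ ∃ q ∈ S, f ∈ M.evalFrom {q} u := by
  induction u with
  | nil => intro S f; simp [NFA.evalFrom_nil]
  | cons a u ih =>
    intro S f
    have hcons : ∀ T : Set σ, M.evalFrom T (a :: u) = M.evalFrom (M.stepSet T a) u := by
      intro T; rfl
    rw [hcons, ih]
    constructor
    · rintro ⟨q1, hq1, hf⟩
      rw [NFA.mem_stepSet] at hq1
      obtain ⟨q, hq, hq1⟩ := hq1
      refine ⟨q, hq, ?_⟩
      rw [hcons, ih]
      exact ⟨q1, by rw [NFA.mem_stepSet]; exact ⟨q, rfl, hq1⟩, hf⟩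
    · rintro ⟨q, hq, hf⟩
      rw [hcons, ih] at hf
      obtain ⟨q1, hq1, hf⟩ := hf
      rw [NFA.mem_stepSet] at hq1
      obtain ⟨q0, hq0, hq1⟩ := hq1
      rw [Set.mem_singleton_iff] at hq0; subst hq0
      exact ⟨q1, by rw [NFA.mem_stepSet]; exact ⟨q0, hq, hq1⟩, hf⟩

section
variable {α Qk : Type*} (k : ℕ) (hk : 2 ≤ k) (Ak : NFA α Qk)

-- the chain of intermediate steps reading σ on tapes m+1, ..., k-1
lemma tapeAut_chain (q q1 : Qk) (σ : α) (z : Qk ⊕ Qk × α × Fin (k - 1))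
    (w : Fin k → List α) (hq1 : q1 ∈ Ak.step q σ)
    (hr : (tapeAut k hk Ak).Reach (Sum.inl q1) w z) :
    ∀ d m : ℕ, (hm : m < k - 1) → k - 2 - m = d →
      (tapeAut k hk Ak).Reach (Sum.inr (q, σ, ⟨m, hm⟩))
        (fun i : Fin k => if i.val ≤ m then w i else σ :: w i) z := by
  intro d
  induction d with
  | zero =>
    intro m hm hd
    have hm' : m = k - 2 := by omega
    subst hm'
    have hstep : (Sum.inl q1 : Qk ⊕ Qk × α × Fin (k - 1)) ∈
        (tapeAut k hk Ak).step (Sum.inr (q, σ, ⟨k - 2, hm⟩))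
          (σ, (⟨k - 1, by omega⟩ : Fin k)) := by
      refine ⟨rfl, ?_, Or.inr ⟨show k - 2 + 1 = k - 1 by omega, q1, hq1, rfl⟩⟩
      show k - 1 = k - 2 + 1
      omega
    have := MTA.Reach.step hstep hr
    have hw : Function.update w (⟨k - 1, by omega⟩ : Fin k)
        (σ :: w ⟨k - 1, by omega⟩) =
        fun i : Fin k => if i.val ≤ k - 2 then w i else σ :: w i := by
      funext i
      rw [Function.update_apply]
      rcases eq_or_ne i ⟨k - 1, by omega⟩ with h | h
      · subst h; rw [if_pos rfl, if_neg (show ¬(k - 1 ≤ k - 2) from by omega)]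
      · rw [if_neg h, if_pos]
        have : i.val ≠ k - 1 := fun hc => h (Fin.ext hc)
        omega
    rwa [hw] at this
  | succ d ih =>
    intro m hm hd
    have hm1 : m + 1 < k - 1 := by omega
    have hnext := ih (m + 1) hm1 (by omega)
    have hstep : (Sum.inr (q, σ, ⟨m + 1, hm1⟩) : Qk ⊕ Qk × α × Fin (k - 1)) ∈
        (tapeAut k hk Ak).step (Sum.inr (q, σ, ⟨m, hm⟩))
          (σ, (⟨m + 1, by omega⟩ : Fin k)) := by
      exact ⟨rfl, rfl, Or.inl ⟨hm1, rfl⟩⟩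
    have := MTA.Reach.step hstep hnext
    have hw : Function.update
        (fun i : Fin k => if i.val ≤ m + 1 then w i else σ :: w i)
        (⟨m + 1, by omega⟩ : Fin k)
        (σ :: (if ((⟨m + 1, by omega⟩ : Fin k) : Fin k).val ≤ m + 1 then
            w ⟨m + 1, by omega⟩ else σ :: w ⟨m + 1, by omega⟩)) =
        fun i : Fin k => if i.val ≤ m then w i else σ :: w i := by
      funext i
      rw [Function.update_apply]
      rcases eq_or_ne i ⟨m + 1, by omega⟩ with h | h
      · subst h; simp
      · rw [if_neg h]
        have hne : i.val ≠ m + 1 := fun hc => h (Fin.ext hc)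
        rcases le_or_gt i.val m with h1 | h1
        · rw [if_pos h1, if_pos (by omega)]
        · rw [if_neg (by omega), if_neg (by omega)]
    rwa [hw] at this

lemma tapeAut_reach_of_evalFrom (u : List α) :
    ∀ q q' : Qk, q' ∈ Ak.evalFrom {q} u →
      (tapeAut k hk Ak).Reach (Sum.inl q) (fun _ => u) (Sum.inl q') := by
  induction u with
  | nil =>
    intro q q' h
    rw [NFA.evalFrom_nil, Set.mem_singleton_iff] at h
    subst h
    exact MTA.Reach.refl _
  | cons σ u ih =>
    intro q q' h
    have hcons : Ak.evalFrom {q} (σ :: u) = Ak.evalFrom (Ak.stepSet {q} σ) u := rfl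
    rw [hcons, mem_evalFrom_iff'] at h
    obtain ⟨q1, hq1, h⟩ := h
    rw [NFA.mem_stepSet] at hq1
    obtain ⟨q0, hq0, hq1⟩ := hq1
    rw [Set.mem_singleton_iff] at hq0; subst hq0
    have hr := ih q1 q' h
    have hmid := tapeAut_chain k hk Ak q0 q1 σ (Sum.inl q') (fun _ => u) hq1 hr
      (k - 2 - 0) 0 (by omega) rfl
    have hstep : (Sum.inr (q0, σ, (⟨0, by omega⟩ : Fin (k - 1))) :
        Qk ⊕ Qk × α × Fin (k - 1)) ∈
        (tapeAut k hk Ak).step (Sum.inl q0) (σ, (⟨0, by omega⟩ : Fin k)) :=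
      ⟨rfl, rfl⟩
    have := MTA.Reach.step hstep hmid
    have hw : Function.update
        (fun i : Fin k => if i.val ≤ 0 then (fun _ : Fin k => u) i else σ :: (fun _ : Fin k => u) i)
        (⟨0, by omega⟩ : Fin k)
        (σ :: (if ((⟨0, by omega⟩ : Fin k)).val ≤ 0 then u else σ :: u)) =
        (fun _ : Fin k => σ :: u) := by
      funext i
      rw [Function.update_apply]
      rcases eq_or_ne i ⟨0, by omega⟩ with h | h
      · subst h; simp
      · rw [if_neg h]
        have hne : i.val ≠ 0 := fun hc => h (Fin.ext hc)
        rw [if_neg (by omega)]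
    rwa [hw] at this

end

section
variable {α Qk : Type*} (k : ℕ) (hk : 2 ≤ k) (Ak : NFA α Qk)

lemma stepSet_singleton' (q : Qk) (σ : α) : Ak.stepSet {q} σ = Ak.step q σ := by
  ext x; simp [NFA.mem_stepSet]

lemma tapeAut_reach_inv {x y : Qk ⊕ Qk × α × Fin (k - 1)} {w : Fin k → List α}
    (hr : (tapeAut k hk Ak).Reach x w y) :
    ∀ f : Qk, y = Sum.inl f →
      (∀ q : Qk, x = Sum.inl q → ∃ u, w = (fun _ => u) ∧ f ∈ Ak.evalFrom {q} u) ∧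
      (∀ (q : Qk) (σ : α) (j : Fin (k - 1)), x = Sum.inr (q, σ, j) →
        ∃ u, (∀ i : Fin k, (i.val ≤ j.val → w i = u) ∧ (j.val < i.val → w i = σ :: u)) ∧
          f ∈ Ak.evalFrom (Ak.step q σ) u) := by
  induction hr with
  | refl p =>
    intro f hf
    constructor
    · intro q0 hq0
      rw [hq0] at hf
      cases hf
      exact ⟨[], rfl, by rw [NFA.evalFrom_nil]; exact rfl⟩
    · intro q0 σ j hq0
      rw [hq0] at hf
      cases hf
  | @step p p' p'' σ i w hstep htail ih =>
    intro f hf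
    obtain ⟨ihl, ihr⟩ := ih f hf
    constructor
    · rintro q0 rfl
      obtain ⟨hi, hp'⟩ := hstep
      subst hp'
      have hi0 : i.val = 0 := congrArg Fin.val hi
      obtain ⟨u, hu, hf'⟩ := ihr q0 σ ⟨0, by omega⟩ rfl
      replace hu : ∀ i'' : Fin k,
          (i''.val ≤ 0 → w i'' = u) ∧ (0 < i''.val → w i'' = σ :: u) := hu
      refine ⟨σ :: u, ?_, ?_⟩
      · funext i'
        rw [Function.update_apply]
        rcases eq_or_ne i' i with h | h
        · rw [if_pos h, (hu i).1 (by omega)]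
        · rw [if_neg h]
          have : i'.val ≠ i.val := fun hc => h (Fin.ext hc)
          exact (hu i').2 (by omega)
      · have hcons : Ak.evalFrom {q0} (σ :: u) = Ak.evalFrom (Ak.stepSet {q0} σ) u := rfl
        rw [hcons, stepSet_singleton']
        exact hf'
    · rintro q0 σ0 j rfl
      obtain ⟨hσ, hit, hdisj⟩ := hstep
      cases hσ
      have hit' : i.val = j.val + 1 := hit
      rcases hdisj with ⟨h, hp'⟩ | ⟨hlast, q1, hq1, hp'⟩
      · subst hp'
        obtain ⟨u, hu, hf'⟩ := ihr q0 σ ⟨j.val + 1, h⟩ rfl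
        replace hu : ∀ i'' : Fin k,
            (i''.val ≤ j.val + 1 → w i'' = u) ∧ (j.val + 1 < i''.val → w i'' = σ :: u) := hu
        refine ⟨u, fun i' => ⟨?_, ?_⟩, hf'⟩
        · intro hle
          rw [Function.update_apply, if_neg (fun hc : i' = i => by
            rw [hc] at hle; omega)]
          exact (hu i').1 (by omega)
        · intro hgt
          rw [Function.update_apply]
          rcases eq_or_ne i' i with h' | h'
          · rw [if_pos h', (hu i).1 (by omega)]
          · rw [if_neg h']
            have : i'.val ≠ i.val := fun hc => h' (Fin.ext hc)
            exact (hu i').2 (by omega)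
      · subst hp'
        obtain ⟨u, rfl, hf'⟩ := ihl q1 rfl
        refine ⟨u, fun i' => ⟨?_, ?_⟩, ?_⟩
        · intro hle
          rw [Function.update_apply, if_neg (fun hc : i' = i => by
            rw [hc] at hle; omega)]
        · intro hgt
          have hlast' : j.val + 1 = k - 1 := hlast
          have hik : i.val = k - 1 := by omega
          have : i'.val < k := i'.isLt
          have hie : i' = i := Fin.ext (by omega)
          rw [Function.update_apply, if_pos hie]
        · rw [mem_evalFrom_iff']
          exact ⟨q1, hq1, hf'⟩

end

/-- Given `k+1` NFA `A 0, …, A k`, there are words `w i ∈ L(A i)` for `i ∈ [k]`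
such that the tuple `(w 0, …, w (k-1))` is accepted by the `k`-tape automaton
built from `A k`, if and only if `⋂_{i=0}^{k} L(A i) ≠ ∅`. -/
theorem tapeAut_satisfaction_iff_intersection {α : Type*} (k : ℕ) (hk : 2 ≤ k)
    (Q : Fin (k + 1) → Type*) (A : ∀ i, NFA α (Q i)) :
    (∃ w : Fin k → List α,
        (∀ i : Fin k, w i ∈ (A i.castSucc).accepts) ∧
        (tapeAut k hk (A (Fin.last k))).Accepts w) ↔
      (⋂ i, ((A i).accepts : Set (List α))).Nonempty := by
  constructor
  · rintro ⟨w, hw, q, hq, f, hfacc, hr⟩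
    obtain ⟨q0, hq0, rfl⟩ := hq
    obtain ⟨f0, hf0, rfl⟩ := hfacc
    obtain ⟨u, rfl, hev⟩ :=
      (tapeAut_reach_inv k hk (A (Fin.last k)) hr f0 rfl).1 q0 rfl
    refine ⟨u, Set.mem_iInter.2 fun i => ?_⟩
    refine Fin.lastCases ?_ (fun i' => ?_) i
    · refine (NFA.mem_accepts (M := A (Fin.last k))).2 ?_
      exact ⟨f0, hf0, (mem_evalFrom_iff' _ _ _ _).2 ⟨q0, hq0, hev⟩⟩
    · exact hw i'
  · rintro ⟨u, hu⟩
    replace hu : ∀ i, u ∈ (A i).accepts := Set.mem_iInter.1 hu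
    have hlast := hu (Fin.last k)
    rw [NFA.mem_accepts] at hlast
    obtain ⟨f, hf, hev⟩ := hlast
    rw [mem_evalFrom_iff'] at hev
    obtain ⟨q0, hq0, hev⟩ := hev
    exact ⟨fun _ => u, fun i => hu i.castSucc,
      Sum.inl q0, ⟨q0, hq0, rfl⟩, Sum.inl f, ⟨f, hf, rfl⟩,
      tapeAut_reach_of_evalFrom k hk _ u q0 f hev⟩
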